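/- Let A be a finite subset of a group G with A = A⁻¹ and A nonempty, and let δ < 1/4. Assume that for every g ∈ A, |Ag ∖ A| ≤ δ|A|. Then |AA ∖ A| ≤ (δ/(1−2δ))·|A|, and moreover AA is a subgroup of G. -/

import Mathlib

open Finset Pointwise

private lemma mem_mulsing {G : Type*} [Group G] [DecidableEq G] {A : Finset G} {g x : G} :
    x ∈ A * {g} ↔ ∃ y ∈ A, y * g = x := by
  constructor
  · intro hx
    obtain ⟨y, hy, z, hz, rfl⟩ := Finset.mem_mul.mp hx
    rw [Finset.mem_singleton] at hz
    exact ⟨y, hy, by rw [hz]⟩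
  · rintro ⟨y, hy, rfl⟩
    exact Finset.mul_mem_mul hy (Finset.mem_singleton_self g)

/-- Fuzzy subgroup lemma: if A = A⁻¹, δ < 1/4, and |Ag \ A| ≤ δ|A| for all g ∈ A,
    then |AA \ A| ≤ (δ/(1−2δ))|A| and AA is a subgroup of G. -/
theorem stmt16 {G : Type*} [Group G] [DecidableEq G] (A : Finset G) (hA : A.Nonempty)
    (hsymm : A⁻¹ = A) (δ : ℝ) (hδ : δ < 1 / 4)
    (h : ∀ g ∈ A, ((A.image (· * g) \ A).card : ℝ) ≤ δ * (A.card : ℝ)) :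
    (((A * A) \ A).card : ℝ) ≤ δ / (1 - 2 * δ) * (A.card : ℝ) ∧
      ∃ H : Subgroup G, ((A * A : Finset G) : Set G) = (H : Set G) := by
  have himg : ∀ g : G, A.image (· * g) = A * {g} := by
    intro g; ext x; rw [Finset.mem_image, mem_mulsing]
  have h' : ∀ g ∈ A, (((A * {g}) \ A).card : ℝ) ≤ δ * (A.card : ℝ) := by
    intro g hg; rw [← himg]; exact h g hg
  have hApos : (0 : ℝ) < (A.card : ℝ) :=
    Nat.cast_pos.mpr (Finset.card_pos.mpr hA)
  have hδ0 : 0 ≤ δ := by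
    obtain ⟨a, ha⟩ := hA
    have := h' a ha
    nlinarith [Nat.cast_nonneg (α := ℝ) (((A * {a}) \ A).card)]
  have hinvA : ∀ {x : G}, x ∈ A → x⁻¹ ∈ A := by
    intro x hx
    rw [← hsymm]
    exact Finset.mem_inv'.mpr (by simpa using hx)
  -- Step 1: for x ∈ A*A, |Ax \ A| ≤ 2δ|A|
  have L1 : ∀ x ∈ A * A, (((A * {x}) \ A).card : ℝ) ≤ 2 * δ * (A.card : ℝ) := by
    intro x hx
    obtain ⟨a, ha, b, hb, rfl⟩ := Finset.mem_mul.mp hx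
    have e1 : A * {a * b} = (A * {a}) * {b} := by
      rw [mul_assoc, Finset.singleton_mul_singleton]
    have hsub : (A * {a * b}) \ A ⊆ (((A * {a}) \ A) * {b}) ∪ ((A * {b}) \ A) := by
      intro x hx
      rw [Finset.mem_sdiff, e1] at hx
      obtain ⟨hx1, hx2⟩ := hx
      obtain ⟨y, hy, rfl⟩ := mem_mulsing.mp hx1
      by_cases hyA : y ∈ A
      · exact Finset.mem_union_right _ (Finset.mem_sdiff.mpr
          ⟨mem_mulsing.mpr ⟨y, hyA, rfl⟩, hx2⟩)
      · exact Finset.mem_union_left _ (mem_mulsing.mpr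
          ⟨y, Finset.mem_sdiff.mpr ⟨hy, hyA⟩, rfl⟩)
    calc (((A * {a * b}) \ A).card : ℝ)
        ≤ (((((A * {a}) \ A) * {b}) ∪ ((A * {b}) \ A)).card : ℝ) := by
          exact_mod_cast Finset.card_le_card hsub
      _ ≤ (((((A * {a}) \ A) * {b})).card : ℝ) + (((A * {b}) \ A).card : ℝ) := by
          exact_mod_cast Finset.card_union_le _ _
      _ ≤ δ * A.card + δ * A.card := by
          rw [Finset.card_mul_singleton]
          exact add_le_add (h' a ha) (h' b hb)
      _ = 2 * δ * A.card := by ring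
  -- Step 2: for x ∈ A*A, |Ax ∩ A| ≥ (1-2δ)|A|
  have key : ∀ x ∈ A * A, (1 - 2 * δ) * (A.card : ℝ) ≤ (((A * {x}) ∩ A).card : ℝ) := by
    intro x hx
    have hsplit : ((A * {x}) ∩ A).card + ((A * {x}) \ A).card = (A * {x}).card :=
      Finset.card_inter_add_card_sdiff _ _
    have hcard : (A * {x}).card = A.card := Finset.card_mul_singleton _ _
    have := L1 x hx
    have hs : (((A * {x}) ∩ A).card : ℝ) + (((A * {x}) \ A).card : ℝ) = (A.card : ℝ) := by
      rw [← hcard]; exact_mod_cast hsplit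
    linarith
  -- A*A is symmetric
  have hAAinv : ∀ {x : G}, x ∈ A * A → x⁻¹ ∈ A * A := by
    intro x hx
    obtain ⟨a, ha, b, hb, rfl⟩ := Finset.mem_mul.mp hx
    rw [mul_inv_rev]
    exact Finset.mul_mem_mul (hinvA hb) (hinvA ha)
  -- closure under multiplication
  have hmul : ∀ x ∈ A * A, ∀ y ∈ A * A, x * y ∈ A * A := by
    intro x hx y hy
    have hy' : y⁻¹ ∈ A * A := hAAinv hy
    set S1 := (A * {x}) ∩ A with hS1
    set S2 := (A * {y⁻¹}) ∩ A with hS2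
    have h1 := key x hx
    have h2 := key y⁻¹ hy'
    have hU : (S1 ∪ S2) ⊆ A := by
      apply Finset.union_subset <;> exact Finset.inter_subset_right
    have hUcard : ((S1 ∪ S2).card : ℝ) ≤ (A.card : ℝ) := by
      exact_mod_cast Finset.card_le_card hU
    have hie : (S1 ∩ S2).card + (S1 ∪ S2).card = S1.card + S2.card :=
      Finset.card_inter_add_card_union _ _
    have hie' : ((S1 ∩ S2).card : ℝ) + ((S1 ∪ S2).card : ℝ)
        = (S1.card : ℝ) + (S2.card : ℝ) := by exact_mod_cast hie
    have hpos : (0 : ℝ) < ((S1 ∩ S2).card : ℝ) := by nlinarith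
    have hne : (S1 ∩ S2).Nonempty := by
      rw [← Finset.card_pos]; exact_mod_cast hpos
    obtain ⟨c, hc⟩ := hne
    rw [Finset.mem_inter] at hc
    obtain ⟨hc1, hc2⟩ := hc
    obtain ⟨a, ha, hax⟩ := mem_mulsing.mp (Finset.mem_inter.mp hc1).1
    obtain ⟨b, hb, hby⟩ := mem_mulsing.mp (Finset.mem_inter.mp hc2).1
    have hxy : x * y = a⁻¹ * b := by
      have h1 : x = a⁻¹ * (a * x) := by group
      rw [h1, hax, ← hby]
      group
    rw [hxy]
    exact Finset.mul_mem_mul (hinvA ha) hb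
  constructor
  · -- the cardinality bound via double counting
    set T := (A * A) \ A with hT
    have hfilter : ∀ x ∈ A * A,
        (1 - 2 * δ) * (A.card : ℝ) ≤ ((A.filter fun a => a * x ∈ A).card : ℝ) := by
      intro x hx
      have himage : (A.filter fun a => a * x ∈ A).image (· * x) = (A * {x}) ∩ A := by
        ext z
        simp only [Finset.mem_image, Finset.mem_filter, Finset.mem_inter, mem_mulsing]
        constructor
        · rintro ⟨a, ⟨ha, hax⟩, rfl⟩; exact ⟨⟨a, ha, rfl⟩, hax⟩
        · rintro ⟨⟨a, ha, rfl⟩, hz⟩; exact ⟨a, ⟨ha, hz⟩, rfl⟩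
      have hinj : Function.Injective (· * x) := fun u v huv => by simpa using huv
      have : (A.filter fun a => a * x ∈ A).card = ((A * {x}) ∩ A).card := by
        rw [← himage, Finset.card_image_of_injective _ hinj]
      rw [this]
      exact key x hx
    -- double counting
    have hswap : ∑ x ∈ T, (A.filter fun a => a * x ∈ A).card
        = ∑ a ∈ A, (T.filter fun x => a * x ∈ A).card := by
      simp only [Finset.card_filter]
      rw [Finset.sum_comm]
    have hper : ∀ a ∈ A, ((T.filter fun x => a * x ∈ A).card : ℝ) ≤ δ * (A.card : ℝ) := by
      intro a ha
      have hcle : (T.filter fun x => a * x ∈ A).card ≤ ((A * {a}) \ A).card := by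
        apply Finset.card_le_card_of_injOn (fun x => x⁻¹)
        · intro x hx
          rw [Finset.mem_coe, Finset.mem_filter, hT, Finset.mem_sdiff] at hx
          obtain ⟨⟨hxAA, hxA⟩, haxA⟩ := hx
          rw [Finset.mem_coe, Finset.mem_sdiff]
          constructor
          · refine mem_mulsing.mpr ⟨(a * x)⁻¹, hinvA haxA, ?_⟩
            group
          · intro hcontra
            exact hxA (by simpa using hinvA hcontra)
        · exact Set.injOn_of_injective (fun u v huv => by simpa using huv)
      calc ((T.filter fun x => a * x ∈ A).card : ℝ)
          ≤ (((A * {a}) \ A).card : ℝ) := by exact_mod_cast hcle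
        _ ≤ δ * A.card := h' a ha
    have hlower : (1 - 2 * δ) * (A.card : ℝ) * (T.card : ℝ)
        ≤ ((∑ x ∈ T, (A.filter fun a => a * x ∈ A).card : ℕ) : ℝ) := by
      push_cast
      rw [mul_comm ((1 - 2*δ) * (A.card : ℝ)) _]
      calc (T.card : ℝ) * ((1 - 2 * δ) * (A.card : ℝ))
          = ∑ _x ∈ T, (1 - 2 * δ) * (A.card : ℝ) := by
            rw [Finset.sum_const, nsmul_eq_mul]
        _ ≤ ∑ x ∈ T, ((A.filter fun a => a * x ∈ A).card : ℝ) := by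
            apply Finset.sum_le_sum
            intro x hx
            exact hfilter x (Finset.mem_sdiff.mp hx).1
    have hupper : ((∑ a ∈ A, (T.filter fun x => a * x ∈ A).card : ℕ) : ℝ)
        ≤ (A.card : ℝ) * (δ * (A.card : ℝ)) := by
      push_cast
      calc ∑ a ∈ A, ((T.filter fun x => a * x ∈ A).card : ℝ)
          ≤ ∑ _a ∈ A, δ * (A.card : ℝ) := Finset.sum_le_sum hper
        _ = (A.card : ℝ) * (δ * (A.card : ℝ)) := by
            rw [Finset.sum_const, nsmul_eq_mul]
    rw [hswap] at hlower
    have hkey : (1 - 2 * δ) * (A.card : ℝ) * (T.card : ℝ)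
        ≤ (A.card : ℝ) * (δ * (A.card : ℝ)) := le_trans hlower hupper
    have h12 : (0 : ℝ) < 1 - 2 * δ := by linarith
    rw [div_mul_eq_mul_div, le_div_iff₀ h12]
    nlinarith [hkey, hApos]
  · -- A*A is a subgroup
    obtain ⟨a, ha⟩ := hA
    refine ⟨{ carrier := ↑(A * A),
              mul_mem' := fun hx hy => hmul _ hx _ hy,
              one_mem' := ?_,
              inv_mem' := fun hx => hAAinv hx }, rfl⟩
    show (1 : G) ∈ (A * A : Finset G)
    have h1 : (1 : G) = a⁻¹ * a := by group
    rw [h1]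
    exact Finset.mul_mem_mul (hinvA ha) ha
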